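/- Under conditions S, i.e. k1·(1 − n1) − e1 − w1 = 0, e1·p1 − s1 − h1 = 0, k2·(1 − n2) − e2 − w2 = 0 and e2·p2 − s2 − h2 = 0, the point (1,1) lying on the separation line Σ = {x = 1} is an equilibrium of both the competitive system Z1 and the facilitation system Z2, i.e. Z1(1,1) = (0,0) and Z2(1,1) = (0,0). Moreover, let k1 = (sqrt(401) − 1)/5, n1 = 1/4, e1 = 2, k2 = 5/2, n2 = 1/10, e2 = (619 − 19·sqrt(401))/300. Then V̂2 = 0 and V̂3 = 19·(1 − sqrt(401))/60, so V̂3 ≠ 0; these are the computational identities underlying the existence of a weak focus of maximal order three at (1,1) for the piecewise system (Corollary 3.2). -/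
import Mathlib


open Real

/-- The competitive resource–consumer system `Z1`. -/
noncomputable def Z1 (k1 n1 e1 p1 s1 w1 h1 : ℝ) (p : ℝ × ℝ) : ℝ × ℝ :=
  (p.1 * (k1 * (1 - n1 * p.1) - e1 * p.2 - w1),
   p.2 * (e1 * p1 * p.1 - s1 * p.2 - h1))

/-- The facilitation resource–consumer system `Z2`. -/
noncomputable def Z2 (k2 n2 e2 p2 s2 w2 h2 : ℝ) (p : ℝ × ℝ) : ℝ × ℝ :=
  (p.1 * (k2 * p.1 * (1 - n2 * p.1) - e2 * p.2 - w2),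
   p.2 * (e2 * p2 * p.1 - s2 * p.2 - h2))

/-- Under conditions `S`, the point `(1,1)` on the separation line `Σ = {x = 1}` is an
equilibrium of both `Z1` and `Z2`; moreover, for the specific parameter values
`k1 = (√401 − 1)/5`, `n1 = 1/4`, `e1 = 2`, `k2 = 5/2`, `n2 = 1/10`,
`e2 = (619 − 19√401)/300`, one has `V̂2 = 0` and `V̂3 = 19(1 − √401)/60 ≠ 0`
(the identities underlying Corollary 3.2). -/
theorem stmt19 (k1 n1 e1 p1 s1 w1 h1 k2 n2 e2 p2 s2 w2 h2 : ℝ)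
    (hS1 : k1 * (1 - n1) - e1 - w1 = 0)
    (hS2 : e1 * p1 - s1 - h1 = 0)
    (hS3 : k2 * (1 - n2) - e2 - w2 = 0)
    (hS4 : e2 * p2 - s2 - h2 = 0)
    (hk1 : k1 = (Real.sqrt 401 - 1) / 5)
    (hn1 : n1 = 1 / 4)
    (he1 : e1 = 2)
    (hk2 : k2 = 5 / 2)
    (hn2 : n2 = 1 / 10)
    (he2 : e2 = (619 - 19 * Real.sqrt 401) / 300) :
    Z1 k1 n1 e1 p1 s1 w1 h1 (1, 1) = (0, 0) ∧
    Z2 k2 n2 e2 p2 s2 w2 h2 (1, 1) = (0, 0) ∧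
    4 * (e2 + k2 * n2 - k2) * k2 * n2 - (k1 * n1 + e1) * k1 * n1
      + (k2 - e2) * k2 = 0 ∧
    k2 ^ 3 * (2 * n2 - 1) ^ 3 + e2 * k2 ^ 2 * (4 * n2 - 1) * (2 * n2 - 1)
      + k2 * (2 * n2 - 1) + 2 * e2 = 19 * (1 - Real.sqrt 401) / 60 ∧
    k2 ^ 3 * (2 * n2 - 1) ^ 3 + e2 * k2 ^ 2 * (4 * n2 - 1) * (2 * n2 - 1)
      + k2 * (2 * n2 - 1) + 2 * e2 ≠ 0 := by
  have hs : Real.sqrt 401 ^ 2 = 401 := Real.sq_sqrt (by norm_num)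
  have hs1 : Real.sqrt 401 ≥ 20 := by
    nlinarith [Real.sqrt_nonneg 401]
  refine ⟨?_, ?_, ?_, ?_, ?_⟩
  · simp only [Z1, Prod.mk.injEq]
    constructor <;> nlinarith [hS1, hS2]
  · simp only [Z2, Prod.mk.injEq]
    constructor <;> nlinarith [hS3, hS4]
  · subst hk1 hn1 he1 hk2 hn2 he2; nlinarith [hs]
  · subst hk2 hn2 he2; nlinarith [hs]
  · subst hk2 hn2 he2; nlinarith [hs, hs1]
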